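/- Let K1, K2, K3 : ℕ → ℝ with K3(n) ≠ 0 for all n, and let (a_n) be the paper's auxiliary sequence a associated with K1, K2, K3 (a_1 = K3(0) and the one-step recursion from the paper). Then a_2 = K3(1)·(K3(0) + K2(0)), and for every n ≥ 2, a_{n+1} = [K3(n)·(n − 1 + K1(n−1) + K2(n−1) + K3(n−1))/K3(n−1)]·a_n − K3(n)·(n − 1 + K1(n−1))·a_{n−1}. -/
import Mathlib


open Finset

/-- Simplification of the recursion for the paper's auxiliary sequence `a`:
`a_2 = K3(1)(K3(0)+K2(0))` and, for `n ≥ 2`,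
`a_{n+1} = [K3(n)(n−1+K1(n−1)+K2(n−1)+K3(n−1))/K3(n−1)]·a_n − K3(n)(n−1+K1(n−1))·a_{n−1}`. -/
theorem aux_a_three_term_recursion (K1 K2 K3 a : ℕ → ℝ)
    (hK3 : ∀ n : ℕ, K3 n ≠ 0)
    (ha1 : a 1 = K3 0)
    (haRec : ∀ n : ℕ, 2 ≤ n →
      a n = K3 (n - 1) * a (n - 1)
        + K3 (n - 1) * ∑ i ∈ Finset.Icc 1 (n - 2), K2 i * a i *
            ∏ j ∈ Finset.Icc (i + 1) (n - 2), ((j : ℝ) + K1 j + K2 j)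
        + K3 (n - 1) * K2 0 * ∏ i ∈ Finset.Icc 1 (n - 2), ((i : ℝ) + K1 i + K2 i)) :
    a 2 = K3 1 * (K3 0 + K2 0)
    ∧ ∀ n : ℕ, 2 ≤ n →
      a (n + 1) = K3 n * ((n : ℝ) - 1 + K1 (n - 1) + K2 (n - 1) + K3 (n - 1)) / K3 (n - 1) * a n
        - K3 n * ((n : ℝ) - 1 + K1 (n - 1)) * a (n - 1) := by
  constructor
  · have h := haRec 2 (by norm_num)
    simp at h
    rw [h, ha1]; ring
  · intro n hn
    obtain ⟨m, rfl⟩ : ∃ m, n = m + 2 := ⟨n - 2, by omega⟩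
    have h1 := haRec (m + 2) (by omega)
    have h2 := haRec (m + 3) (by omega)
    simp only [show m + 2 - 1 = m + 1 from rfl, show m + 2 - 2 = m from rfl,
      show m + 3 - 1 = m + 2 from rfl, show m + 3 - 2 = m + 1 from rfl] at h1 h2 ⊢
    rw [Finset.sum_Icc_succ_top (by omega : 1 ≤ m + 1),
        Finset.prod_Icc_succ_top (by omega : 1 ≤ m + 1)] at h2
    have hsplit : ∀ i ∈ Finset.Icc 1 m,
        K2 i * a i * ∏ j ∈ Finset.Icc (i + 1) (m + 1), ((j : ℝ) + K1 j + K2 j)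
        = K2 i * a i * ((∏ j ∈ Finset.Icc (i + 1) m, ((j : ℝ) + K1 j + K2 j)) *
            (((m + 1 : ℕ) : ℝ) + K1 (m + 1) + K2 (m + 1))) := by
      intro i hi
      rw [Finset.prod_Icc_succ_top (by simp at hi; omega : i + 1 ≤ m + 1)]
    rw [Finset.sum_congr rfl hsplit] at h2
    rw [show Finset.Icc (m + 1 + 1) (m + 1) = (∅ : Finset ℕ) by simp, Finset.prod_empty,
      mul_one] at h2
    set S := ∑ i ∈ Finset.Icc 1 m, K2 i * a i *
        ∏ j ∈ Finset.Icc (i + 1) m, ((j : ℝ) + K1 j + K2 j) with hS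
    set P := ∏ i ∈ Finset.Icc 1 m, ((i : ℝ) + K1 i + K2 i) with hP
    set c : ℝ := ((m + 1 : ℕ) : ℝ) + K1 (m + 1) + K2 (m + 1) with hc
    have hsum : (∑ i ∈ Finset.Icc 1 m, K2 i * a i *
        ((∏ j ∈ Finset.Icc (i + 1) m, ((j : ℝ) + K1 j + K2 j)) * c)) = S * c := by
      rw [hS, Finset.sum_mul]
      exact Finset.sum_congr rfl (fun i _ => by ring)
    rw [hsum] at h2
    have h2' : a (m + 3) = K3 (m + 2) * a (m + 2)
        + K3 (m + 2) * c * (S + K2 0 * P) + K3 (m + 2) * K2 (m + 1) * a (m + 1) := by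
      rw [h2]; ring
    have hSP : S + K2 0 * P = a (m + 2) / K3 (m + 1) - a (m + 1) := by
      rw [h1]
      field_simp [hK3 (m + 1)]
      ring
    rw [h2', hSP]
    have hK := hK3 (m + 1)
    push_cast [hc]
    field_simp
    ring
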